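/- Let Q be a compact convex set with (cos α)·D_O ⊆ Q ⊆ D_O, α ∈ (0, π/22). Let p, q ∈ ℝ² and u a direction such that the homothetic copies Q_{pq}(u−5α) and Q_{pq}(u+5α) of Q both exist. Then the Euclidean disk D_{pq}(u) through p and q with center on the ray u[p] exists; i.e., the angle between the vector pq and the direction u is strictly less than π/2. -/

import Mathlib

open Real
open scoped Pointwise

/-- Clockwise rotation of the direction `u ∈ ℂ ≅ ℝ²` by the angle `θ`. -/
noncomputable def rotCW (θ : ℝ) (u : ℂ) : ℂ := Complex.exp (-(θ : ℂ) * Complex.I) * u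

/-- The homothetic copy of `Q ⊆ ℂ ≅ ℝ²` with center placed at `z` and scaling factor `lam`
(`Q` is regarded as centered at the origin). -/
noncomputable def homothet (Q : Set ℂ) (z : ℂ) (lam : ℝ) : Set ℂ := (fun w => z + (lam : ℂ) * w) '' Q

/-- The planar cross product: positive iff `b` lies (strictly) counterclockwise of `a`,
i.e. iff `b` is to the left of the directed line along `a`. -/
noncomputable def cross2 (a b : ℂ) : ℝ := a.re * b.im - a.im * b.re

private lemma normsq_eq (z : ℂ) : ‖z‖ ^ 2 = z.re ^ 2 + z.im ^ 2 := by
  rw [Complex.sq_norm, Complex.normSq_apply]; ring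

private lemma rotCW_re (θ : ℝ) (u : ℂ) :
    (rotCW θ u).re = Real.cos θ * u.re + Real.sin θ * u.im := by
  have h : -(θ : ℂ) * Complex.I = ((-θ : ℝ) : ℂ) * Complex.I := by push_cast; ring
  have key : rotCW θ u = ((Real.cos θ : ℂ) - (Real.sin θ : ℂ) * Complex.I) * u := by
    rw [rotCW, h, Complex.exp_mul_I, ← Complex.ofReal_cos, ← Complex.ofReal_sin,
      Real.cos_neg, Real.sin_neg]
    push_cast
    ring
  rw [key]
  simp [Complex.mul_re, Complex.sub_re, Complex.sub_im, Complex.mul_im]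
  rw [Complex.cos_ofReal_re, Complex.sin_ofReal_re]

private lemma rotCW_im (θ : ℝ) (u : ℂ) :
    (rotCW θ u).im = Real.cos θ * u.im - Real.sin θ * u.re := by
  have h : -(θ : ℂ) * Complex.I = ((-θ : ℝ) : ℂ) * Complex.I := by push_cast; ring
  have key : rotCW θ u = ((Real.cos θ : ℂ) - (Real.sin θ : ℂ) * Complex.I) * u := by
    rw [rotCW, h, Complex.exp_mul_I, ← Complex.ofReal_cos, ← Complex.ofReal_sin,
      Real.cos_neg, Real.sin_neg]
    push_cast
    ring
  rw [key]
  simp [Complex.mul_re, Complex.sub_re, Complex.sub_im, Complex.mul_im]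
  rw [Complex.cos_ofReal_re, Complex.sin_ofReal_re]
  ring

private lemma norm_rotCW (θ : ℝ) (u : ℂ) : ‖rotCW θ u‖ = ‖u‖ := by
  have h : -(θ : ℂ) * Complex.I = ((-θ : ℝ) : ℂ) * Complex.I := by push_cast; ring
  rw [rotCW, norm_mul, h, Complex.norm_exp_ofReal_mul_I]
  simp

set_option maxHeartbeats 1200000 in
/-- Claim 4.3 (quantitative supporting-line consequence): if the homothetic copy of `Q`
with center `c = p + t•v` touches `p` on its frontier and contains `q` in its closure,
then `⟨q - p, v⟩ ≥ -‖q - p‖ sin α`. -/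
private lemma support_ineq (α : ℝ) (hα0 : 0 < α) (hα2 : α < π / 2)
    (Q : Set ℂ) (hQconv : Convex ℝ Q)
    (hsub : Real.cos α • Metric.closedBall (0 : ℂ) 1 ⊆ Q)
    (hsup : Q ⊆ Metric.closedBall (0 : ℂ) 1)
    (p q v : ℂ) (hpq : p ≠ q) (hv : ‖v‖ = 1) (t lam : ℝ) (ht : 0 < t) (hlam : 0 < lam)
    (hp : p ∈ frontier (homothet Q (p + t • v) lam))
    (hq : q ∈ closure (homothet Q (p + t • v) lam)) :
    -(‖q - p‖ * Real.sin α) ≤ (q - p).re * v.re + (q - p).im * v.im := by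
  have hcos : 0 < Real.cos α := Real.cos_pos_of_mem_Ioo ⟨by linarith, hα2⟩
  set c : ℂ := p + t • v with hc
  set K : Set ℂ := homothet Q c lam with hK
  -- K is convex
  have hKconv : Convex ℝ K := by
    have h1 : Convex ℝ ((fun w : ℂ => (lam : ℂ) * w) '' Q) := by
      refine hQconv.is_linear_image ⟨fun x y => mul_add _ x y, fun r x => ?_⟩
      simp only [Complex.real_smul]; ring
    have h2 := h1.translate c
    have : K = (fun x => c + x) '' ((fun w : ℂ => (lam : ℂ) * w) '' Q) := by
      rw [hK, homothet, ← Set.image_comp]; rfl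
    rw [this]; exact h2
  -- inner ball
  have hball : Metric.closedBall c (lam * Real.cos α) ⊆ K := by
    intro x hx
    refine ⟨(lam : ℂ)⁻¹ * (x - c), hsub ?_, ?_⟩
    · refine ⟨(Real.cos α)⁻¹ • ((lam : ℂ)⁻¹ * (x - c)), ?_, ?_⟩
      · simp only [Metric.mem_closedBall, dist_zero_right, norm_smul, norm_mul, norm_inv,
          Complex.norm_real, Real.norm_eq_abs, abs_of_pos hcos, abs_of_pos hlam]
        have hxc : ‖x - c‖ ≤ lam * Real.cos α := by
          rw [← dist_eq_norm]; exact hx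
        calc (Real.cos α)⁻¹ * (lam⁻¹ * ‖x - c‖)
            ≤ (Real.cos α)⁻¹ * (lam⁻¹ * (lam * Real.cos α)) := by gcongr
          _ = 1 := by field_simp
      · exact smul_inv_smul₀ (ne_of_gt hcos) _
    · have hlamne : (lam : ℂ) ≠ 0 := by
        simp [Complex.ofReal_ne_zero]; exact ne_of_gt hlam
      field_simp
      ring
  have hint : Metric.ball c (lam * Real.cos α) ⊆ interior K := by
    have h0 : Metric.ball c (lam * Real.cos α)
        = interior (Metric.closedBall c (lam * Real.cos α)) :=
      (interior_closedBall c (ne_of_gt (mul_pos hlam hcos))).symm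
    rw [h0]; exact interior_mono hball
  -- outer ball
  have hKsub : K ⊆ Metric.closedBall c lam := by
    rintro _ ⟨w, hw, rfl⟩
    have hw1 : ‖w‖ ≤ 1 := by
      have := hsup hw; rwa [Metric.mem_closedBall, dist_zero_right] at this
    rw [Metric.mem_closedBall, dist_eq_norm]
    have : c + (lam : ℂ) * w - c = (lam : ℂ) * w := by ring
    rw [this, norm_mul, Complex.norm_real, Real.norm_eq_abs, abs_of_pos hlam]
    calc lam * ‖w‖ ≤ lam * 1 := mul_le_mul_of_nonneg_left hw1 hlam.le
      _ = lam := mul_one lam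
  have hclos : closure K ⊆ Metric.closedBall c lam :=
    closure_minimal hKsub Metric.isClosed_closedBall
  have htlam : t ≤ lam := by
    have hpc : p ∈ closure K := frontier_subset_closure hp
    have := hclos hpc
    rw [Metric.mem_closedBall, dist_eq_norm, hc] at this
    have h1 : p - (p + t • v) = -(t • v) := by ring
    rw [h1, norm_neg, norm_smul, Real.norm_eq_abs, abs_of_pos ht, hv, mul_one] at this
    exact this
  -- main argument
  by_contra hcon
  push_neg at hcon
  set w : ℂ := q - p with hw
  set s : ℝ := ‖w‖ with hs
  set I : ℝ := w.re * v.re + w.im * v.im with hI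
  have hs0 : 0 < s := by
    rw [hs, norm_pos_iff, hw, sub_ne_zero]; exact fun h => hpq h.symm
  have hsin : 0 < Real.sin α := Real.sin_pos_of_pos_of_lt_pi hα0 (by linarith [Real.pi_pos])
  have hIneg : I < 0 := by
    have h0 := mul_pos hs0 hsin; linarith only [h0, hcon]
  set d : ℝ := s ^ 2 - t * I with hd
  have hd0 : 0 < d := by
    have h0 := mul_pos ht (neg_pos.2 hIneg)
    have h1 := pow_pos hs0 2
    rw [hd]; linarith only [h0, h1]
  set θ : ℝ := s ^ 2 / d with hθ
  have hθ0 : 0 < θ := div_pos (by positivity) hd0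
  have hθ1 : θ < 1 := by
    rw [hθ, div_lt_one hd0]
    have h0 := mul_pos ht (neg_pos.2 hIneg)
    rw [hd]; linarith only [h0]
  have hθd : θ * d = s ^ 2 := by rw [hθ]; field_simp
  have h1θ : (1 - θ) * d = -(t * I) := by rw [hθ]; field_simp; ring
  set x : ℂ := θ⁻¹ • (p - (1 - θ) • q) with hx
  clear_value c K w s I d θ x
  have hcombo : θ • x + (1 - θ) • q = p := by
    rw [hx, smul_inv_smul₀ (ne_of_gt hθ0)]; ring
  -- compute ‖x - c‖
  have hxc : x - c = θ⁻¹ • (((θ - 1) • w - (θ * t) • v)) := by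
    rw [hx, hc, hw]
    simp only [Complex.real_smul]
    push_cast
    have hθC : (θ : ℂ) ≠ 0 := by exact_mod_cast ne_of_gt hθ0
    field_simp
    ring
  have hznormsq : ‖(θ - 1) • w - (θ * t) • v‖ ^ 2
      = (1 - θ) ^ 2 * s ^ 2 + 2 * θ * (1 - θ) * t * I + θ ^ 2 * t ^ 2 := by
    have hv2 : v.re ^ 2 + v.im ^ 2 = 1 := by
      have := normsq_eq v; rw [hv] at this; linarith [this.symm]
    have hw2 : w.re ^ 2 + w.im ^ 2 = s ^ 2 := by rw [hs]; exact (normsq_eq w).symm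
    rw [normsq_eq]
    simp only [Complex.sub_re, Complex.sub_im, Complex.real_smul, Complex.mul_re,
      Complex.mul_im, Complex.ofReal_re, Complex.ofReal_im, hI]
    linear_combination (θ - 1) ^ 2 * hw2 + (θ * t) ^ 2 * hv2
  have hI2 : s ^ 2 * Real.sin α ^ 2 < I ^ 2 := by
    have h1 : I + s * Real.sin α < 0 := by linarith only [hcon]
    have h2 : I - s * Real.sin α < 0 := by
      linarith only [hcon, mul_pos hs0 hsin]
    have h3 := mul_pos (neg_pos.2 h1) (neg_pos.2 h2)
    nlinarith only [h3]
  have hA : d ^ 2 * ((1 - θ) ^ 2 * s ^ 2 + 2 * θ * (1 - θ) * t * I + θ ^ 2 * t ^ 2)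
      = s ^ 2 * t ^ 2 * (s ^ 2 - I ^ 2) := by
    linear_combination (s ^ 2 * t ^ 2 + t ^ 2 * θ * d + 2 * t * I * (1 - θ) * d) * hθd
      + (s ^ 2 * ((1 - θ) * d + t * I)) * h1θ
  have hB : d ^ 2 * (θ * t * Real.cos α) ^ 2 = s ^ 2 * t ^ 2 * (s ^ 2 * Real.cos α ^ 2) := by
    linear_combination (t ^ 2 * Real.cos α ^ 2 * (θ * d + s ^ 2)) * hθd
  have hsc : Real.sin α ^ 2 + Real.cos α ^ 2 = 1 := Real.sin_sq_add_cos_sq α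
  have hlt : d ^ 2 * ((1 - θ) ^ 2 * s ^ 2 + 2 * θ * (1 - θ) * t * I + θ ^ 2 * t ^ 2)
      < d ^ 2 * (θ * t * Real.cos α) ^ 2 := by
    rw [hA, hB]
    have hst : 0 < s ^ 2 * t ^ 2 := by positivity
    have e3 : s ^ 2 * Real.sin α ^ 2 + s ^ 2 * Real.cos α ^ 2 = s ^ 2 := by
      linear_combination s ^ 2 * hsc
    have h3 : s ^ 2 - I ^ 2 < s ^ 2 * Real.cos α ^ 2 := by linarith only [hI2, e3]
    exact mul_lt_mul_of_pos_left h3 hst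
  have hkey : ‖(θ - 1) • w - (θ * t) • v‖ ^ 2 < (θ * t * Real.cos α) ^ 2 := by
    rw [hznormsq]
    exact lt_of_mul_lt_mul_left hlt (sq_nonneg d)
  have hznorm : ‖(θ - 1) • w - (θ * t) • v‖ < θ * t * Real.cos α := by
    have h0 : 0 ≤ θ * t * Real.cos α := by positivity
    exact lt_of_pow_lt_pow_left₀ 2 h0 hkey
  have hxball : x ∈ Metric.ball c (lam * Real.cos α) := by
    rw [Metric.mem_ball, dist_eq_norm, hxc, norm_smul, Real.norm_eq_abs,
      abs_of_pos (inv_pos.2 hθ0)]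
    have : θ⁻¹ * ‖(θ - 1) • w - (θ * t) • v‖ < θ⁻¹ * (θ * t * Real.cos α) :=
      mul_lt_mul_of_pos_left hznorm (inv_pos.2 hθ0)
    have h2 : θ⁻¹ * (θ * t * Real.cos α) = t * Real.cos α := by field_simp
    rw [h2] at this
    calc θ⁻¹ * ‖(θ - 1) • w - (θ * t) • v‖ < t * Real.cos α := this
      _ ≤ lam * Real.cos α := mul_le_mul_of_nonneg_right htlam hcos.le
  have hpint : p ∈ interior K := by
    rw [← hcombo]
    exact hKconv.combo_interior_closure_mem_interior (hint hxball) hq hθ0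
      (by linarith) (by ring)
  exact hp.2 hpint

set_option maxHeartbeats 1200000 in
/-- Existence step (i) in the proof of Theorem 1.1(ii): let `Q` be compact convex with
`(cos α) • D_O ⊆ Q ⊆ D_O`, `α ∈ (0, π/22)`. If both homothetic copies `Q_{pq}(u−5α)` and
`Q_{pq}(u+5α)` of `Q` (touching `p` and `q`, centered on the rays from `p` in the directions
obtained from `u` by rotating by `∓5α`) exist, then the Euclidean disk `D_{pq}(u)` through `p`
and `q` with center on the ray `u[p]` exists. -/
theorem stmt_14 (α : ℝ) (hα : α ∈ Set.Ioo 0 (π / 22))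
    (Q : Set ℂ) (hQc : IsCompact Q) (hQconv : Convex ℝ Q)
    (hsub : Real.cos α • Metric.closedBall (0 : ℂ) 1 ⊆ Q)
    (hsup : Q ⊆ Metric.closedBall (0 : ℂ) 1)
    (p q : ℂ) (hpq : p ≠ q) (u : ℂ) (hu : ‖u‖ = 1)
    (t₁ lam₁ t₂ lam₂ : ℝ) (ht₁ : 0 < t₁) (hlam₁ : 0 < lam₁) (ht₂ : 0 < t₂) (hlam₂ : 0 < lam₂)
    (hp₁ : p ∈ frontier (homothet Q (p + t₁ • rotCW (-(5 * α)) u) lam₁))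
    (hq₁ : q ∈ frontier (homothet Q (p + t₁ • rotCW (-(5 * α)) u) lam₁))
    (hp₂ : p ∈ frontier (homothet Q (p + t₂ • rotCW (5 * α) u) lam₂))
    (hq₂ : q ∈ frontier (homothet Q (p + t₂ • rotCW (5 * α) u) lam₂)) :
    ∃ r : ℝ, 0 < r ∧ dist q (p + r • u) = r := by
  obtain ⟨hα0, hα22⟩ := hα
  have hπ : π < 3.15 := Real.pi_lt_d2
  have hαs : α < 0.1432 := by linarith only [hα22, hπ]
  have hα2 : α < π / 2 := by linarith only [hα22, Real.pi_pos]
  have hv₁ : ‖rotCW (-(5 * α)) u‖ = 1 := by rw [norm_rotCW]; exact hu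
  have hv₂ : ‖rotCW (5 * α) u‖ = 1 := by rw [norm_rotCW]; exact hu
  have h1 := support_ineq α hα0 hα2 Q hQconv hsub hsup p q (rotCW (-(5 * α)) u) hpq hv₁
    t₁ lam₁ ht₁ hlam₁ hp₁ (frontier_subset_closure hq₁)
  have h2 := support_ineq α hα0 hα2 Q hQconv hsub hsup p q (rotCW (5 * α) u) hpq hv₂
    t₂ lam₂ ht₂ hlam₂ hp₂ (frontier_subset_closure hq₂)
  set w : ℂ := q - p with hw
  set s : ℝ := ‖w‖ with hs
  have hs0 : 0 < s := by
    rw [hs, norm_pos_iff, hw, sub_ne_zero]; exact fun h => hpq h.symm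
  set a : ℝ := w.re * u.re + w.im * u.im with ha
  set b : ℝ := u.re * w.im - u.im * w.re with hb
  set S : ℝ := Real.sin α with hS
  set c5 : ℝ := Real.cos (5 * α) with hc5
  set s5 : ℝ := Real.sin (5 * α) with hs5
  have hu2 : u.re ^ 2 + u.im ^ 2 = 1 := by
    have := normsq_eq u; rw [hu] at this; linarith [this.symm]
  have hw2 : w.re ^ 2 + w.im ^ 2 = s ^ 2 := (normsq_eq w).symm
  have hab : a ^ 2 + b ^ 2 = s ^ 2 := by rw [ha, hb]; nlinarith [hu2, hw2]
  -- rewrite the two inner-product inequalities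
  have h1' : -(s * S) ≤ c5 * a + s5 * b := by
    rw [rotCW_re, rotCW_im] at h1
    rw [Real.cos_neg, Real.sin_neg] at h1
    calc -(s * S) = -(‖q - p‖ * Real.sin α) := by rw [hs, hw, hS]
      _ ≤ (q - p).re * (Real.cos (5 * α) * u.re + -Real.sin (5 * α) * u.im)
          + (q - p).im * (Real.cos (5 * α) * u.im - -Real.sin (5 * α) * u.re) := h1
      _ = c5 * a + s5 * b := by rw [ha, hb, hc5, hs5, hw]; ring
  have h2' : -(s * S) ≤ c5 * a - s5 * b := by
    rw [rotCW_re, rotCW_im] at h2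
    calc -(s * S) = -(‖q - p‖ * Real.sin α) := by rw [hs, hw, hS]
      _ ≤ (q - p).re * (Real.cos (5 * α) * u.re + Real.sin (5 * α) * u.im)
          + (q - p).im * (Real.cos (5 * α) * u.im - Real.sin (5 * α) * u.re) := h2
      _ = c5 * a - s5 * b := by rw [ha, hb, hc5, hs5, hw]; ring
  -- numeric trig bounds
  have hS0 : 0 < S := Real.sin_pos_of_pos_of_lt_pi hα0 (by linarith [Real.pi_pos])
  have hSle : S ≤ α := Real.sin_le hα0.le
  have h5α1 : 5 * α ≤ 1 := by linarith only [hαs]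
  have hαsq : α ^ 2 < 0.0206 := by
    have h0 := mul_lt_mul_of_pos_left hαs hα0
    nlinarith only [h0, hαs]
  have hs5lb : 4 * S ≤ s5 := by
    have := Real.sin_gt_sub_cube (by linarith : (0:ℝ) < 5 * α)
    rw [← hs5] at this
    have h0 := mul_lt_mul_of_pos_right hαsq hα0
    nlinarith only [this, hSle, h0, hα0]
  have hc5lb : (7:ℝ)/10 ≤ c5 := by
    have := Real.one_sub_sq_div_two_le_cos (x := 5 * α)
    rw [← hc5] at this
    nlinarith only [this, hαsq]
  have hsc : s5 ^ 2 + c5 ^ 2 = 1 := by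
    rw [hs5, hc5]; exact Real.sin_sq_add_cos_sq (5 * α)
  -- conclude a > 0
  clear_value w s a b S c5 s5
  clear hp₁ hq₁ hp₂ hq₂ hsub hsup hQc hQconv h1 h2 hv₁ hv₂
  have ha0 : 0 < a := by
    by_contra hcon
    push_neg at hcon
    have hc5a : c5 * a ≤ 0 := mul_nonpos_of_nonneg_of_nonpos (by linarith) hcon
    have hca : c5 * (-a) ≤ s * S := by nlinarith only [h1', h2']
    have hb1 : s5 * b ≤ s * S := by nlinarith only [h2', hc5a]
    have hb2 : -(s * S) ≤ s5 * b := by nlinarith only [h1', hc5a]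
    have hsS : 0 ≤ s * S := (mul_pos hs0 hS0).le
    have hp1 : 0 ≤ s * S - c5 * (-a) := by linarith only [hca]
    have hp2 : 0 ≤ s * S + c5 * (-a) := by linarith only [hsS, hc5a]
    have hsq1 : (c5 * a) ^ 2 ≤ (s * S) ^ 2 := by
      nlinarith only [mul_nonneg hp1 hp2]
    have hp3 : 0 ≤ s * S - s5 * b := by linarith only [hb1]
    have hp4 : 0 ≤ s * S + s5 * b := by linarith only [hb2]
    have hsq2 : (s5 * b) ^ 2 ≤ (s * S) ^ 2 := by
      nlinarith only [mul_nonneg hp3 hp4]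
    have h7 := mul_le_mul_of_nonneg_left hsq1 (sq_nonneg s5)
    have h8 := mul_le_mul_of_nonneg_left hsq2 (sq_nonneg c5)
    have e1 : c5 ^ 2 * s5 ^ 2 * s ^ 2 = s5 ^ 2 * (c5 * a) ^ 2 + c5 ^ 2 * (s5 * b) ^ 2 := by
      linear_combination (-(c5 ^ 2 * s5 ^ 2)) * hab
    have e2 : s5 ^ 2 * (s * S) ^ 2 + c5 ^ 2 * (s * S) ^ 2 = s ^ 2 * S ^ 2 := by
      linear_combination (s * S) ^ 2 * hsc
    have hmain : c5 ^ 2 * s5 ^ 2 * s ^ 2 ≤ s ^ 2 * S ^ 2 := by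
      linarith only [h7, h8, e1, e2]
    have h9 := mul_le_mul hc5lb hs5lb (by positivity : (0:ℝ) ≤ 4 * S)
      (le_trans (by norm_num) hc5lb)
    have hcs : (28:ℝ)/10 * S ≤ c5 * s5 := by nlinarith only [h9]
    have h10 := mul_le_mul hcs hcs (by positivity : (0:ℝ) ≤ (28:ℝ)/10 * S)
      (le_trans (by positivity) hcs)
    have h4 : ((28:ℝ)/10 * S) ^ 2 ≤ (c5 * s5) ^ 2 := by nlinarith only [h10]
    have h5 := mul_le_mul_of_nonneg_right h4 (sq_nonneg s)
    have h6 : (0:ℝ) < S ^ 2 * s ^ 2 := by positivity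
    linarith only [hmain, h5, h6]
  -- construct the disk
  have hrpos : 0 < s ^ 2 / (2 * a) := div_pos (by positivity) (by linarith only [ha0])
  refine ⟨s ^ 2 / (2 * a), hrpos, ?_⟩
  set r : ℝ := s ^ 2 / (2 * a) with hr
  have hr0 : 0 < r := hrpos
  have hra : 2 * r * a = s ^ 2 := by rw [hr]; field_simp
  have hdiff : q - (p + r • u) = w - r • u := by rw [hw]; ring
  have hds : dist q (p + r • u) ^ 2 = r ^ 2 := by
    rw [dist_eq_norm, hdiff, normsq_eq]
    simp only [Complex.sub_re, Complex.sub_im, Complex.real_smul, Complex.mul_re,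
      Complex.mul_im, Complex.ofReal_re, Complex.ofReal_im]
    linear_combination hw2 + r ^ 2 * hu2 + 2 * r * ha - hra
  exact (sq_eq_sq₀ dist_nonneg hr0.le).mp hds
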